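/- Let G be a Cohen–Macaulay very well-covered graph with 2n vertices (standard labeling). Then for every i ∈ [n] there exists a minimal vertex cover C of G such that y_i ∈ C and x_j ∈ C for all j < i, i.e., the minimal index j with y_j ∈ C equals i. -/
import Mathlib


/-- A vertex cover: a set of vertices meeting every edge. -/
def IsVertexCover {V : Type*} (G : SimpleGraph V) (C : Set V) : Prop :=
  ∀ ⦃v w : V⦄, G.Adj v w → v ∈ C ∨ w ∈ C

/-- A minimal vertex cover: no proper subset is a vertex cover. -/
def IsMinimalVertexCover {V : Type*} (G : SimpleGraph V) (C : Set V) : Prop :=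
  IsVertexCover G C ∧ ∀ D : Set V, D ⊂ C → ¬ IsVertexCover G D

/-- An independent set: pairwise non-adjacent vertices. -/
def IsIndepSet {V : Type*} (G : SimpleGraph V) (S : Set V) : Prop :=
  ∀ ⦃v : V⦄, v ∈ S → ∀ ⦃w : V⦄, w ∈ S → ¬ G.Adj v w

/-- A maximal independent set: no proper superset is independent. -/
def IsMaximalIndepSet {V : Type*} (G : SimpleGraph V) (S : Set V) : Prop :=
  IsIndepSet G S ∧ ∀ T : Set V, IsIndepSet G T → S ⊆ T → S = T

/-- Lemma 4.10: for every i there is a minimal vertex cover C with y_i ∈ C and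
x_j ∈ C for all j < i. -/
theorem stmt_11 {n : ℕ} (G : SimpleGraph (Fin n ⊕ Fin n))
    (h1 : IsMinimalVertexCover G (Set.range Sum.inl))
    (h2 : IsMaximalIndepSet G (Set.range Sum.inr))
    (h3 : ∀ i : Fin n, G.Adj (Sum.inl i) (Sum.inr i))
    (h4 : ∀ i j : Fin n, G.Adj (Sum.inl i) (Sum.inr j) → i ≤ j)
    (h5 : ∀ i j : Fin n, G.Adj (Sum.inl i) (Sum.inr j) → ¬ G.Adj (Sum.inl i) (Sum.inl j))
    (h6 : ∀ i j k : Fin n, i ≠ j → j ≠ k → i ≠ k →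
      ∀ z ∈ ({Sum.inl i, Sum.inr i} : Set (Fin n ⊕ Fin n)),
        G.Adj z (Sum.inl j) → G.Adj (Sum.inr j) (Sum.inl k) → G.Adj z (Sum.inl k)) :
    ∀ i : Fin n, ∃ C : Set (Fin n ⊕ Fin n), IsMinimalVertexCover G C ∧
      Sum.inr i ∈ C ∧ ∀ j : Fin n, j < i → Sum.inl j ∈ C := by
  intro i
  set A : Set (Fin n) := {j | j ≠ i ∧ ¬ G.Adj (Sum.inl i) (Sum.inr j)} with hA
  set C : Set (Fin n ⊕ Fin n) := (Sum.inl '' A) ∪ (Sum.inr '' Aᶜ) with hC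
  have key1 : ∀ a b : Fin n, G.Adj (Sum.inl a) (Sum.inr b) → b ∈ A → a ∈ A := by
    intro a b hab hb
    have ha' : a ≠ i := by
      intro h; subst h; exact hb.2 hab
    refine ⟨ha', ?_⟩
    intro hia
    by_cases hab' : a = b
    · subst hab'; exact hb.2 hia
    · have := h6 b a i (Ne.symm hab') ha' hb.1 (Sum.inr b) (by simp) hab.symm hia.symm
      exact hb.2 this.symm
  have key2 : ∀ a b : Fin n, G.Adj (Sum.inl a) (Sum.inl b) → a ∈ A ∨ b ∈ A := by
    intro a b hab
    by_contra h
    push_neg at h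
    obtain ⟨ha, hb⟩ := h
    have hne : a ≠ b := by
      intro h; subst h; exact G.irrefl hab
    simp only [hA, Set.mem_setOf_eq, not_and, not_not, ne_eq] at ha hb
    by_cases hai : a = i
    · have hbi : b ≠ i := fun h => hne (hai.trans h.symm)
      exact h5 i b (hb hbi) (hai ▸ hab)
    · by_cases hbi : b = i
      · exact h5 i a (ha hai) (hbi ▸ hab.symm)
      · have hia := ha hai
        have hib := hb hbi
        have := h6 a b i hne hbi hai (Sum.inl a) (by simp) hab hib.symm
        exact h5 i a hia this.symm
  have hcov : IsVertexCover G C := by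
    intro v w hvw
    match v, w with
    | Sum.inl a, Sum.inl b =>
      rcases key2 a b hvw with h | h
      · exact Or.inl (Or.inl ⟨a, h, rfl⟩)
      · exact Or.inr (Or.inl ⟨b, h, rfl⟩)
    | Sum.inl a, Sum.inr b =>
      by_cases hb : b ∈ A
      · exact Or.inl (Or.inl ⟨a, key1 a b hvw hb, rfl⟩)
      · exact Or.inr (Or.inr ⟨b, hb, rfl⟩)
    | Sum.inr a, Sum.inl b =>
      by_cases ha : a ∈ A
      · exact Or.inr (Or.inl ⟨b, key1 b a hvw.symm ha, rfl⟩)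
      · exact Or.inl (Or.inr ⟨a, ha, rfl⟩)
    | Sum.inr a, Sum.inr b =>
      exact absurd hvw (h2.1 ⟨a, rfl⟩ ⟨b, rfl⟩)
  refine ⟨C, ⟨hcov, ?_⟩, ?_, ?_⟩
  · intro D hD hDcov
    obtain ⟨v, hvC, hvD⟩ := Set.exists_of_ssubset hD
    rcases hvC with ⟨k, hk, rfl⟩ | ⟨k, hk, rfl⟩
    · rcases hDcov (h3 k) with h | h
      · exact hvD h
      · have : Sum.inr k ∈ C := hD.1 h
        rcases this with ⟨m, _, hm⟩ | ⟨m, hm, hm'⟩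
        · exact Sum.inl_ne_inr hm
        · have : m = k := Sum.inr_injective hm'
          subst this
          exact hm hk
    · rcases hDcov (h3 k) with h | h
      · have : Sum.inl k ∈ C := hD.1 h
        rcases this with ⟨m, hm, hm'⟩ | ⟨m, _, hm⟩
        · have : m = k := Sum.inl_injective hm'
          subst this
          exact hk hm
        · exact Sum.inl_ne_inr hm.symm
      · exact hvD h
  · refine Or.inr ⟨i, ?_, rfl⟩
    simp [hA]
  · intro j hj
    refine Or.inl ⟨j, ⟨?_, ?_⟩, rfl⟩
    · exact Fin.ne_of_lt hj
    · intro hadj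
      exact absurd (h4 i j hadj) (not_le.mpr hj)
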